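/- Let d ≥ 1, H ∈ ℕ, and let μ_src and μ_tgt be Borel probability measures on ℝ^d with finite second moments. Let π_0,…,π_H : ℝ^d → ℝ^d be measurable maps that are feasible for transporting μ_src to μ_tgt, i.e. (π̄_H)_# μ_src = μ_tgt where π̄_h := π_h ∘ ⋯ ∘ π_0. Then the dynamic cost ((H+1)/2)·Σ_{h=0}^{H} ∫ ‖π̄_h(x) − π̄_{h−1}(x)‖² dμ_src(x) (with π̄_{−1} := id) is at least W₂²(μ_src, μ_tgt). -/

import Mathlib

open MeasureTheory ENNReal

/-- The squared Wasserstein-2 distance. -/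
noncomputable def W2sq {d : ℕ} (μ ν : Measure (EuclideanSpace ℝ (Fin d))) : ℝ≥0∞ :=
  ⨅ (γ : Measure (EuclideanSpace ℝ (Fin d) × EuclideanSpace ℝ (Fin d)))
    (_ : IsProbabilityMeasure γ ∧ γ.map Prod.fst = μ ∧ γ.map Prod.snd = ν),
      2⁻¹ * ∫⁻ p, (‖p.1 - p.2‖₊ : ℝ≥0∞) ^ 2 ∂γ

/-- `trajComp π h = π̄_{h-1} = π_{h-1} ∘ ⋯ ∘ π_0`, with `trajComp π 0 = π̄_{-1} = id`. -/
def trajComp {α : Type*} (π : ℕ → α → α) : ℕ → α → α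
  | 0 => id
  | n + 1 => π n ∘ trajComp π n

/-- any feasible policy `(π_0,…,π_H)` transporting `μsrc` to `μtgt` has dynamic
cost `((H+1)/2) Σ_{h=0}^{H} ∫ ‖π̄_h(x) − π̄_{h−1}(x)‖² dμsrc(x)` at least `W₂²(μsrc, μtgt)`. -/
lemma sq_sum_le_card_mul_sum_sq_ennreal {ι : Type*} (s : Finset ι) (a : ι → NNReal) :
    (∑ i ∈ s, (a i : ℝ≥0∞)) ^ 2 ≤ (s.card : ℝ≥0∞) * ∑ i ∈ s, (a i : ℝ≥0∞) ^ 2 := by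
  have h : (∑ i ∈ s, ((a i : ℝ) : ℝ)) ^ 2 ≤ (s.card : ℝ) * ∑ i ∈ s, ((a i : ℝ)) ^ 2 :=
    sq_sum_le_card_mul_sum_sq
  have h' : (∑ i ∈ s, a i) ^ 2 ≤ (s.card : NNReal) * ∑ i ∈ s, a i ^ 2 := by
    rw [← NNReal.coe_le_coe]; push_cast; exact h
  calc (∑ i ∈ s, (a i : ℝ≥0∞)) ^ 2 = (((∑ i ∈ s, a i) ^ 2 : NNReal) : ℝ≥0∞) := by push_cast; ring
    _ ≤ (((s.card : NNReal) * ∑ i ∈ s, a i ^ 2 : NNReal) : ℝ≥0∞) := by exact_mod_cast h'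
    _ = (s.card : ℝ≥0∞) * ∑ i ∈ s, (a i : ℝ≥0∞) ^ 2 := by push_cast; ring

theorem stmt4 {d : ℕ} (hd : 1 ≤ d) (H : ℕ)
    (μsrc μtgt : Measure (EuclideanSpace ℝ (Fin d)))
    [IsProbabilityMeasure μsrc] [IsProbabilityMeasure μtgt]
    (h2src : ∫⁻ x, (‖x‖₊ : ℝ≥0∞) ^ 2 ∂μsrc ≠ ⊤)
    (h2tgt : ∫⁻ x, (‖x‖₊ : ℝ≥0∞) ^ 2 ∂μtgt ≠ ⊤)
    (π : ℕ → EuclideanSpace ℝ (Fin d) → EuclideanSpace ℝ (Fin d))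
    (hmeas : ∀ h ≤ H, Measurable (π h))
    (hfeas : μsrc.map (trajComp π (H + 1)) = μtgt) :
    ((H : ℝ≥0∞) + 1) / 2 *
        ∑ h ∈ Finset.range (H + 1),
          ∫⁻ x, (‖trajComp π (h + 1) x - trajComp π h x‖₊ : ℝ≥0∞) ^ 2 ∂μsrc ≥
      W2sq μsrc μtgt := by
  -- measurability of compositions
  have hT : ∀ n ≤ H + 1, Measurable (trajComp π n) := by
    intro n hn
    induction n with
    | zero => exact measurable_id
    | succ k ih =>
      exact (hmeas k (Nat.lt_succ_iff.mp hn)).comp (ih (le_of_lt hn))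
  set T := trajComp π (H + 1) with hTdef
  have hTm : Measurable T := hT (H + 1) le_rfl
  have hpair : Measurable fun x => (x, T x) := measurable_id.prodMk hTm
  set γ := μsrc.map (fun x => (x, T x)) with hγdef
  have hprob : IsProbabilityMeasure γ := Measure.isProbabilityMeasure_map hpair.aemeasurable
  have hfst : γ.map Prod.fst = μsrc := by
    rw [hγdef, Measure.map_map measurable_fst hpair]
    rw [show (Prod.fst ∘ fun x => (x, T x)) = id from rfl, Measure.map_id]
  have hsnd : γ.map Prod.snd = μtgt := by
    rw [hγdef, Measure.map_map measurable_snd hpair]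
    exact hfeas
  have hle : W2sq μsrc μtgt ≤ 2⁻¹ * ∫⁻ p, (‖p.1 - p.2‖₊ : ℝ≥0∞) ^ 2 ∂γ :=
    iInf_le_of_le γ (iInf_le _ ⟨hprob, hfst, hsnd⟩)
  have hmi : Measurable fun p : EuclideanSpace ℝ (Fin d) × EuclideanSpace ℝ (Fin d) =>
      (‖p.1 - p.2‖₊ : ℝ≥0∞) ^ 2 :=
    ((measurable_fst.sub measurable_snd).nnnorm.coe_nnreal_ennreal).pow_const 2
  rw [hγdef, lintegral_map hmi hpair] at hle
  -- pointwise bound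
  have hpt : ∀ x, (‖x - T x‖₊ : ℝ≥0∞) ^ 2 ≤
      ((H : ℝ≥0∞) + 1) * ∑ h ∈ Finset.range (H + 1),
        (‖trajComp π (h + 1) x - trajComp π h x‖₊ : ℝ≥0∞) ^ 2 := by
    intro x
    have htel : ∑ h ∈ Finset.range (H + 1),
        (trajComp π (h + 1) x - trajComp π h x) = T x - x := by
      exact Finset.sum_range_sub (fun n => trajComp π n x) (H + 1)
    have hnorm : ‖x - T x‖₊ ≤ ∑ h ∈ Finset.range (H + 1),
        ‖trajComp π (h + 1) x - trajComp π h x‖₊ := by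
      rw [show x - T x = -(T x - x) by abel, nnnorm_neg, ← htel]
      exact nnnorm_sum_le _ _
    calc (‖x - T x‖₊ : ℝ≥0∞) ^ 2
        ≤ (∑ h ∈ Finset.range (H + 1),
            (‖trajComp π (h + 1) x - trajComp π h x‖₊ : ℝ≥0∞)) ^ 2 := by
          gcongr
          exact_mod_cast hnorm
      _ ≤ ((Finset.range (H + 1)).card : ℝ≥0∞) * ∑ h ∈ Finset.range (H + 1),
            (‖trajComp π (h + 1) x - trajComp π h x‖₊ : ℝ≥0∞) ^ 2 :=
          sq_sum_le_card_mul_sum_sq_ennreal _ _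
      _ = ((H : ℝ≥0∞) + 1) * _ := by
          congr 1
          simp [Finset.card_range]
  have hint : ∫⁻ x, (‖x - T x‖₊ : ℝ≥0∞) ^ 2 ∂μsrc ≤
      ((H : ℝ≥0∞) + 1) * ∑ h ∈ Finset.range (H + 1),
        ∫⁻ x, (‖trajComp π (h + 1) x - trajComp π h x‖₊ : ℝ≥0∞) ^ 2 ∂μsrc := by
    calc ∫⁻ x, (‖x - T x‖₊ : ℝ≥0∞) ^ 2 ∂μsrc
        ≤ ∫⁻ x, ((H : ℝ≥0∞) + 1) * ∑ h ∈ Finset.range (H + 1),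
            (‖trajComp π (h + 1) x - trajComp π h x‖₊ : ℝ≥0∞) ^ 2 ∂μsrc :=
          lintegral_mono hpt
      _ = ((H : ℝ≥0∞) + 1) * ∫⁻ x, ∑ h ∈ Finset.range (H + 1),
            (‖trajComp π (h + 1) x - trajComp π h x‖₊ : ℝ≥0∞) ^ 2 ∂μsrc :=
          lintegral_const_mul' _ _ (by simp)
      _ = ((H : ℝ≥0∞) + 1) * ∑ h ∈ Finset.range (H + 1),
            ∫⁻ x, (‖trajComp π (h + 1) x - trajComp π h x‖₊ : ℝ≥0∞) ^ 2 ∂μsrc := by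
          congr 1
          refine lintegral_finset_sum _ fun h hh => ?_
          have h1 := hT (h + 1) (Nat.succ_le_succ (Nat.le_of_lt_succ (Finset.mem_range.mp hh)))
          have h2 := hT h (le_trans (Nat.le_succ h) (Nat.succ_le_succ (Nat.le_of_lt_succ (Finset.mem_range.mp hh))))
          exact ((h1.sub h2).nnnorm.coe_nnreal_ennreal).pow_const 2
  calc W2sq μsrc μtgt ≤ 2⁻¹ * ∫⁻ x, (‖x - T x‖₊ : ℝ≥0∞) ^ 2 ∂μsrc := hle
    _ ≤ 2⁻¹ * (((H : ℝ≥0∞) + 1) * ∑ h ∈ Finset.range (H + 1),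
          ∫⁻ x, (‖trajComp π (h + 1) x - trajComp π h x‖₊ : ℝ≥0∞) ^ 2 ∂μsrc) := by
        gcongr
    _ = ((H : ℝ≥0∞) + 1) / 2 * ∑ h ∈ Finset.range (H + 1),
          ∫⁻ x, (‖trajComp π (h + 1) x - trajComp π h x‖₊ : ℝ≥0∞) ^ 2 ∂μsrc := by
        rw [ENNReal.div_eq_inv_mul]
        ring
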